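/- For every complex number q with |q| < 1, the following identity holds: (1+q) · Σ_{n≥0} (−q^2; q^2)_n q^{2n+1} / (q; q^2)_{n+1} = (q^4; q^4)_∞/(q; q)_∞ − 1. -/

import Mathlib

/-- The finite q-Pochhammer symbol `(a; q)_n = ∏_{j=0}^{n-1} (1 - a q^j)`. -/
noncomputable def qPoch (a q : ℂ) (n : ℕ) : ℂ := ∏ j ∈ Finset.range n, (1 - a * q ^ j)

/-- The infinite q-Pochhammer symbol `(a; q)_∞ = ∏_{j=0}^{∞} (1 - a q^j)`. -/
noncomputable def qPochInf (a q : ℂ) : ℂ := ∏' j : ℕ, (1 - a * q ^ j)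

open Filter Finset

lemma qfactor_ne {a q : ℂ} (ha : ‖a‖ < 1) (hq : ‖q‖ < 1) (j : ℕ) : 1 - a * q ^ j ≠ 0 := by
  intro h
  have h1 : a * q ^ j = 1 := by linear_combination -h
  have : ‖a * q ^ j‖ < 1 := by
    calc ‖a * q ^ j‖ = ‖a‖ * ‖q‖ ^ j := by rw [norm_mul, norm_pow]
    _ ≤ ‖a‖ * 1 := by
        apply mul_le_mul_of_nonneg_left _ (norm_nonneg a)
        exact pow_le_one₀ (norm_nonneg q) hq.le
    _ < 1 := by simpa using ha
  rw [h1] at this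
  simp at this

lemma qlog_summable {a q : ℂ} (ha : ‖a‖ < 1) (hq : ‖q‖ < 1) :
    Summable fun j : ℕ => Complex.log (1 - a * q ^ j) := by
  refine Summable.of_norm_bounded_eventually_nat (g := fun j => 3 / 2 * (‖a‖ * ‖q‖ ^ j)) ?_ ?_
  · exact ((summable_geometric_of_lt_one (norm_nonneg q) hq).mul_left ‖a‖).mul_left _
  · have h0 : Tendsto (fun j : ℕ => ‖a‖ * ‖q‖ ^ j) atTop (nhds 0) := by
      simpa using (tendsto_pow_atTop_nhds_zero_of_lt_one (norm_nonneg q) hq).const_mul ‖a‖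
    filter_upwards [h0.eventually (eventually_le_nhds (by norm_num : (0:ℝ) < 1/2))] with j hj
    have hz : ‖-(a * q ^ j)‖ ≤ 1 / 2 := by
      rwa [norm_neg, norm_mul, norm_pow]
    have := Complex.norm_log_one_add_half_le_self hz
    rw [norm_neg, norm_mul, norm_pow] at this
    rw [← sub_eq_add_neg] at this
    exact this

lemma qPochInf_eq_exp {a q : ℂ} (ha : ‖a‖ < 1) (hq : ‖q‖ < 1) :
    qPochInf a q = Complex.exp (∑' j : ℕ, Complex.log (1 - a * q ^ j)) := by
  have := Complex.cexp_tsum_eq_tprod (f := fun j : ℕ => 1 - a * q ^ j)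
    (fun j => qfactor_ne ha hq j) (qlog_summable ha hq)
  exact this.symm

lemma qPochInf_ne_zero {a q : ℂ} (ha : ‖a‖ < 1) (hq : ‖q‖ < 1) : qPochInf a q ≠ 0 := by
  rw [qPochInf_eq_exp ha hq]; exact Complex.exp_ne_zero _

lemma qmultipliable {a q : ℂ} (ha : ‖a‖ < 1) (hq : ‖q‖ < 1) :
    Multipliable fun j : ℕ => 1 - a * q ^ j :=
  Complex.multipliable_of_summable_log (qlog_summable ha hq)

lemma qPoch_tendsto {a q : ℂ} (ha : ‖a‖ < 1) (hq : ‖q‖ < 1) :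
    Tendsto (fun n => qPoch a q n) atTop (nhds (qPochInf a q)) :=
  (qmultipliable ha hq).hasProd.tendsto_prod_nat

theorem stmt_1 (q : ℂ) (hq : ‖q‖ < 1) :
    (1 + q) * ∑' n : ℕ, qPoch (-q ^ 2) (q ^ 2) n * q ^ (2 * n + 1) / qPoch q (q ^ 2) (n + 1) =
      qPochInf (q ^ 4) (q ^ 4) / qPochInf q q - 1 := by
  have hq1 : ‖q‖ < 1 := hq
  have hq0 : (0:ℝ) ≤ ‖q‖ := norm_nonneg q
  have hq2 : ‖q ^ 2‖ < 1 := by rw [norm_pow]; exact pow_lt_one₀ hq0 hq1 (by norm_num)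
  have hq2' : ‖-q ^ 2‖ < 1 := by rwa [norm_neg]
  have hq4 : ‖q ^ 4‖ < 1 := by rw [norm_pow]; exact pow_lt_one₀ hq0 hq1 (by norm_num)
  -- notation
  set P1 : ℂ := qPochInf (-q ^ 2) (q ^ 2) with hP1
  set P2 : ℂ := qPochInf q (q ^ 2) with hP2
  set P3 : ℂ := qPochInf (q ^ 2) (q ^ 2) with hP3
  have hP2ne : P2 ≠ 0 := qPochInf_ne_zero hq1 hq2
  have hP3ne : P3 ≠ 0 := qPochInf_ne_zero hq2 hq2
  -- denominators nonzero
  have hden : ∀ n, qPoch q (q ^ 2) n ≠ 0 := fun n =>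
    Finset.prod_ne_zero_iff.2 fun j _ => qfactor_ne hq1 hq2 j
  -- partial product sequences
  set B : ℕ → ℂ := fun n => qPoch (-q ^ 2) (q ^ 2) n / qPoch q (q ^ 2) n with hB
  set t : ℕ → ℂ := fun n => qPoch (-q ^ 2) (q ^ 2) n * q ^ (2 * n + 1) / qPoch q (q ^ 2) (n + 1)
    with ht
  -- telescoping
  have htel : ∀ N, (1 + q) * ∑ n ∈ range N, t n = B N - 1 := by
    intro N
    induction N with
    | zero => simp [hB, qPoch]
    | succ N ih =>
      rw [Finset.sum_range_succ, mul_add, ih]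
      have hstep : (1 + q) * t N = B (N + 1) - B N := by
        have hdN := hden N
        have hfN := qfactor_ne hq1 hq2 N
        have e1 : qPoch q (q ^ 2) (N + 1) = qPoch q (q ^ 2) N * (1 - q * (q ^ 2) ^ N) :=
          Finset.prod_range_succ _ N
        have e2 : qPoch (-q ^ 2) (q ^ 2) (N + 1)
            = qPoch (-q ^ 2) (q ^ 2) N * (1 + q ^ 2 * (q ^ 2) ^ N) := by
          rw [qPoch, qPoch, Finset.prod_range_succ]; ring
        have e3 : q ^ (2 * N + 1) = q * (q ^ 2) ^ N := by
          rw [pow_succ, pow_mul]; ring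
        simp only [ht, hB, e1, e2, e3]
        field_simp
        ring
      rw [hstep]; ring
  -- summability of t
  have hnum := (qPoch_tendsto hq2' hq2).norm
  have hMb : BddAbove (Set.range fun n => ‖qPoch (-q ^ 2) (q ^ 2) n‖) := hnum.bddAbove_range
  obtain ⟨M, hM⟩ := hMb
  have hM' : ∀ n, ‖qPoch (-q ^ 2) (q ^ 2) n‖ ≤ M := fun n => hM (Set.mem_range_self n)
  have hM0 : (0:ℝ) ≤ M := le_trans (norm_nonneg _) (hM' 0)
  have hdlim : Tendsto (fun n => ‖qPoch q (q ^ 2) n‖) atTop (nhds ‖P2‖) :=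
    (qPoch_tendsto hq1 hq2).norm
  have hc : ∃ c > 0, ∀ n, c ≤ ‖qPoch q (q ^ 2) n‖ := by
    have hL : (0:ℝ) < ‖P2‖ := norm_pos_iff.2 hP2ne
    obtain ⟨N, hN⟩ := (eventually_atTop).1
      (hdlim.eventually (eventually_gt_nhds (half_lt_self hL)))
    refine ⟨min (‖P2‖ / 2) ((Finset.range (N + 1)).inf' ⟨0, by simp⟩
      fun n => ‖qPoch q (q ^ 2) n‖), ?_, ?_⟩
    · apply lt_min (half_pos hL)
      apply (Finset.lt_inf'_iff _).2
      intro n _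
      exact norm_pos_iff.2 (hden n)
    · intro n
      rcases le_or_gt n N with h | h
      · exact le_trans (min_le_right _ _)
          (Finset.inf'_le _ (Finset.mem_range.2 (Nat.lt_succ_of_le h)))
      · exact le_trans (min_le_left _ _) (hN n h.le).le
  obtain ⟨c, hc0, hcle⟩ := hc
  have hsum : Summable t := by
    refine Summable.of_norm_bounded (g := fun n => M * ‖q‖ / c * (‖q‖ ^ 2) ^ n) ?_ ?_
    · apply Summable.mul_left
      exact summable_geometric_of_lt_one (by positivity) (by rw [← norm_pow]; exact hq2)
    · intro n
      have h1 : ‖t n‖ = ‖qPoch (-q ^ 2) (q ^ 2) n‖ * ‖q‖ ^ (2 * n + 1) /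
          ‖qPoch q (q ^ 2) (n + 1)‖ := by
        simp [ht, norm_div, norm_mul, norm_pow]
      rw [h1]
      have hpw : ‖q‖ ^ (2 * n + 1) = (‖q‖ ^ 2) ^ n * ‖q‖ := by
        rw [pow_succ, ← pow_mul]
      rw [hpw]
      rw [div_le_iff₀ (lt_of_lt_of_le hc0 (hcle (n + 1)))]
      calc ‖qPoch (-q ^ 2) (q ^ 2) n‖ * ((‖q‖ ^ 2) ^ n * ‖q‖)
          ≤ M * ((‖q‖ ^ 2) ^ n * ‖q‖) := by
            apply mul_le_mul_of_nonneg_right (hM' n) (by positivity)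
        _ = M * ‖q‖ / c * (‖q‖ ^ 2) ^ n * c := by field_simp
        _ ≤ M * ‖q‖ / c * (‖q‖ ^ 2) ^ n * ‖qPoch q (q ^ 2) (n + 1)‖ := by
            apply mul_le_mul_of_nonneg_left (hcle (n + 1)) (by positivity)
  -- limit of partial sums
  have hBlim : Tendsto B atTop (nhds (P1 / P2)) :=
    (qPoch_tendsto hq2' hq2).div (qPoch_tendsto hq1 hq2) hP2ne
  have hlim1 : Tendsto (fun N => (1 + q) * ∑ n ∈ range N, t n) atTop (nhds (P1 / P2 - 1)) := by
    have : (fun N => (1 + q) * ∑ n ∈ range N, t n) = fun N => B N - 1 := funext htel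
    rw [this]
    exact hBlim.sub tendsto_const_nhds
  have hlim2 : Tendsto (fun N => (1 + q) * ∑ n ∈ range N, t n) atTop
      (nhds ((1 + q) * ∑' n, t n)) :=
    hsum.hasSum.tendsto_sum_nat.const_mul _
  have hkey : (1 + q) * ∑' n, t n = P1 / P2 - 1 := tendsto_nhds_unique hlim2 hlim1
  -- product identities
  have hA : qPochInf q q = P2 * P3 := by
    have heven : ∀ k : ℕ, 1 - q * q ^ (2 * k) = 1 - q * (q ^ 2) ^ k := fun k => by
      rw [pow_mul q 2 k]
    have hodd : ∀ k : ℕ, 1 - q * q ^ (2 * k + 1) = 1 - q ^ 2 * (q ^ 2) ^ k := fun k => by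
      rw [pow_succ q (2 * k), pow_mul q 2 k]; ring
    have he : Multipliable fun k : ℕ => (fun j : ℕ => 1 - q * q ^ j) (2 * k) :=
      (qmultipliable hq1 hq2).congr fun k => (heven k).symm
    have ho : Multipliable fun k : ℕ => (fun j : ℕ => 1 - q * q ^ j) (2 * k + 1) :=
      (qmultipliable hq2 hq2).congr fun k => (hodd k).symm
    have key := tprod_even_mul_odd (f := fun j : ℕ => 1 - q * q ^ j) he ho
    calc qPochInf q q = _ := key.symm
      _ = P2 * P3 := by
        congr 1
        · exact tprod_congr fun k => heven k
        · exact tprod_congr fun k => hodd k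
  have hB4 : qPochInf (q ^ 4) (q ^ 4) = P3 * P1 := by
    have hm1 := qmultipliable hq2 hq2
    have hm2 := qmultipliable hq2' hq2
    have := Multipliable.tprod_mul hm1 hm2
    rw [hP3, hP1, qPochInf, qPochInf, qPochInf, ← this]
    apply tprod_congr
    intro k
    have h4 : (q ^ 4) ^ k = (q ^ 2) ^ k * (q ^ 2) ^ k := by
      rw [← mul_pow]; ring_nf
    rw [h4]; ring
  rw [hkey, hA, hB4]
  rw [mul_comm P2 P3, mul_div_mul_left _ _ hP3ne]
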